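/- Let G = (V, E) be an undirected simple graph on V = {1,…,N} with N ≥ 1, and let W̄ ∈ ℝ^{N×N} satisfy W̄_{ij} = 0 whenever i ≠ j and {i,j} ∉ E. Index perturbations by the set F = { (i,i) : i ∈ V } ∪ { (i,j) : {i,j} ∈ E } of matrix positions allowed to be nonzero, and for δ ∈ ℝ^F let W(δ) ∈ ℝ^{N×N} be given by W(δ)_{ij} = W̄_{ij} + δ_{ij} for (i,j) ∈ F and W(δ)_{ij} = 0 otherwise. Then for (Lebesgue-)almost every (δ, v) ∈ ℝ^F × ℝ^N, the Krylov matrix K(W(δ), v) is nonsingular; that is, the set { (δ, v) : det K(W(δ), v) = 0 } has Lebesgue measure zero in ℝ^F × ℝ^N. -/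

import Mathlib

open Matrix MeasureTheory

/-- The Krylov matrix whose `k`-th column (`k = 0,1,…,N-1`) is `M^k v`. -/
def krylov {N : ℕ} (M : Matrix (Fin N) (Fin N) ℝ) (v : Fin N → ℝ) :
    Matrix (Fin N) (Fin N) ℝ :=
  Matrix.of fun i k => ((M ^ (k : ℕ)) *ᵥ v) i


lemma measurable_mv_eval {σ : Type*} (p : MvPolynomial σ ℝ) :
    Measurable (fun x : σ → ℝ => MvPolynomial.eval x p) := by
  induction p using MvPolynomial.induction_on with
  | C c => simpa using measurable_const
  | add p q hp hq => simp only [map_add]; exact hp.add hq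
  | mul_X p i hp => simp only [map_mul, MvPolynomial.eval_X]; exact hp.mul (measurable_pi_apply i)

lemma mvpoly_null : ∀ {n : ℕ} (p : MvPolynomial (Fin n) ℝ), p ≠ 0 →
    volume {x : Fin n → ℝ | MvPolynomial.eval x p = 0} = 0 := by
  intro n
  induction n with
  | zero =>
    intro p hp
    obtain ⟨c, rfl⟩ := MvPolynomial.C_surjective (Fin 0) p
    have hc : c ≠ 0 := fun h => hp (by simp [h])
    have : {x : Fin 0 → ℝ | MvPolynomial.eval x (MvPolynomial.C c) = 0} = ∅ := by
      ext x; simp [hc]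
    rw [this]; simp
  | succ n ih =>
    intro p hp
    set q := MvPolynomial.finSuccEquiv ℝ n p with hq_def
    have hq : q ≠ 0 := by
      simpa [hq_def] using (map_ne_zero_iff _ (MvPolynomial.finSuccEquiv ℝ n).injective).mpr hp
    obtain ⟨i, hi⟩ : ∃ i, q.coeff i ≠ 0 := by
      by_contra h
      push_neg at h
      exact hq (Polynomial.ext fun i => by simp [h i])
    have hS : MeasurableSet {x : Fin (n+1) → ℝ | MvPolynomial.eval x p = 0} :=
      (measurable_mv_eval p) (measurableSet_singleton 0)
    -- transfer to product
    set e := MeasurableEquiv.piFinSuccAbove (fun _ : Fin (n+1) => ℝ) 0 with he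
    have hmp := (MeasureTheory.measurePreserving_piFinSuccAbove (α := fun _ : Fin (n+1) => ℝ) (fun _ => volume) 0).symm
    have h1 : volume {x : Fin (n+1) → ℝ | MvPolynomial.eval x p = 0}
        = (volume.prod volume) (e.symm ⁻¹' {x | MvPolynomial.eval x p = 0}) := by
      exact (hmp.measure_preimage hS.nullMeasurableSet).symm
    have hT : MeasurableSet (e.symm ⁻¹' {x : Fin (n+1) → ℝ | MvPolynomial.eval x p = 0}) :=
      e.symm.measurable hS
    have hTdesc : (e.symm ⁻¹' {x : Fin (n+1) → ℝ | MvPolynomial.eval x p = 0})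
        = {ys : ℝ × (Fin n → ℝ) | Polynomial.eval ys.1 (q.map (MvPolynomial.eval ys.2)) = 0} := by
      ext ⟨y, s⟩
      have : e.symm (y, s) = Fin.cons y s := by
        simp [he, MeasurableEquiv.piFinSuccAbove, Fin.insertNthEquiv, Fin.insertNth_zero']
      simp only [Set.mem_preimage, Set.mem_setOf_eq, this]
      rw [MvPolynomial.eval_eq_eval_mv_eval']
    rw [h1, hTdesc]
    -- swap coordinates
    have hTm : MeasurableSet {ys : ℝ × (Fin n → ℝ) |
        Polynomial.eval ys.1 (q.map (MvPolynomial.eval ys.2)) = 0} := by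
      rw [← hTdesc]; exact hT
    have hswap : (volume.prod volume) {ys : ℝ × (Fin n → ℝ) |
          Polynomial.eval ys.1 (q.map (MvPolynomial.eval ys.2)) = 0}
        = (volume.prod volume) {sy : (Fin n → ℝ) × ℝ |
          Polynomial.eval sy.2 (q.map (MvPolynomial.eval sy.1)) = 0} := by
      rw [← MeasureTheory.Measure.prod_swap, MeasureTheory.Measure.map_apply measurable_swap hTm]
      rfl
    rw [hswap]
    rw [MeasureTheory.Measure.measure_prod_null]
    · have hae : ∀ᵐ s : Fin n → ℝ, MvPolynomial.eval s (q.coeff i) ≠ 0 := by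
        rw [MeasureTheory.ae_iff]
        simpa using ih (q.coeff i) hi
      filter_upwards [hae] with s hs
      have hqs : q.map (MvPolynomial.eval s) ≠ 0 := fun h => hs (by
        have := congrArg (Polynomial.coeff · i) h
        simpa [Polynomial.coeff_map] using this)
      have hfin : Set.Finite {y : ℝ | Polynomial.eval y (q.map (MvPolynomial.eval s)) = 0} :=
        Polynomial.finite_setOf_isRoot hqs
      have : (Prod.mk s ⁻¹' {sy : (Fin n → ℝ) × ℝ |
          Polynomial.eval sy.2 (q.map (MvPolynomial.eval sy.1)) = 0})
          = {y : ℝ | Polynomial.eval y (q.map (MvPolynomial.eval s)) = 0} := rfl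
      rw [this]
      exact hfin.measure_zero _
    · have : MeasurableSet (Prod.swap ⁻¹' {ys : ℝ × (Fin n → ℝ) |
          Polynomial.eval ys.1 (q.map (MvPolynomial.eval ys.2)) = 0}) :=
        measurable_swap hTm
      convert this using 1
      rfl

lemma mvpoly_null' {σ : Type*} [Fintype σ] (p : MvPolynomial σ ℝ) (hp : p ≠ 0) :
    volume {x : σ → ℝ | MvPolynomial.eval x p = 0} = 0 := by
  classical
  let f : σ ≃ Fin (Fintype.card σ) := Fintype.equivFin σ
  let E := MeasurableEquiv.piCongrLeft (fun _ : Fin (Fintype.card σ) => ℝ) f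
  have hmp := MeasureTheory.volume_measurePreserving_piCongrLeft
    (fun _ : Fin (Fintype.card σ) => ℝ) f
  have hp' : MvPolynomial.rename f p ≠ 0 := fun h =>
    hp (MvPolynomial.rename_injective f f.injective (by rw [h, map_zero]))
  have hB := mvpoly_null (MvPolynomial.rename f p) hp'
  have key : {x : σ → ℝ | MvPolynomial.eval x p = 0}
      = E ⁻¹' {y | MvPolynomial.eval y (MvPolynomial.rename f p) = 0} := by
    ext x
    simp only [Set.mem_preimage, Set.mem_setOf_eq, MvPolynomial.eval_rename]
    have : (E x) ∘ f = x := funext fun i =>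
      MeasurableEquiv.piCongrLeft_apply_apply (β := fun _ => ℝ) f x i
    rw [this]
  rw [key]
  have hmeas : MeasurableSet {y : Fin (Fintype.card σ) → ℝ |
      MvPolynomial.eval y (MvPolynomial.rename f p) = 0} :=
    measurableSet_eq_fun (measurable_mv_eval _) measurable_const
  exact (hmp.measure_preimage hmeas.nullMeasurableSet).trans hB

lemma ringHom_mulVec {n : Type*} [Fintype n] {R S : Type*} [CommSemiring R] [CommSemiring S]
    (φ : R →+* S) (A : Matrix n n R) (w : n → R) (i : n) :
    φ ((A *ᵥ w) i) = ((A.map φ) *ᵥ fun j => φ (w j)) i := by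
  simp [Matrix.mulVec, dotProduct, map_sum]

lemma ringHom_map_pow {n : Type*} [Fintype n] [DecidableEq n] {R S : Type*} [CommSemiring R]
    [CommSemiring S] (φ : R →+* S) (A : Matrix n n R) (k : ℕ) :
    (A ^ k).map φ = (A.map φ) ^ k := by
  simpa [RingHom.mapMatrix_apply] using map_pow (φ.mapMatrix) A k


/-- Randomly perturbing the diagonal entries and the entries on edges of `W̄` (the positions
in `F = {(i,i)} ∪ {(i,j) : {i,j} ∈ E}`) makes the Krylov matrix almost surely nonsingular:
the set of perturbation-and-initial-condition pairs `(δ, v)` for which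
`det K(W̄ + δ, v) = 0` has Lebesgue measure zero. -/
theorem perturbed_krylov_ae_nonsingular
    (N : ℕ) (hN : 1 ≤ N) (G : SimpleGraph (Fin N)) [DecidableRel G.Adj]
    (Wbar : Matrix (Fin N) (Fin N) ℝ)
    (hW : ∀ i j, i ≠ j → ¬ G.Adj i j → Wbar i j = 0) :
    volume {p : ({q : Fin N × Fin N // q.1 = q.2 ∨ G.Adj q.1 q.2} → ℝ) × (Fin N → ℝ) |
      (krylov (Matrix.of fun i j =>
        if h : i = j ∨ G.Adj i j then Wbar i j + p.1 ⟨(i, j), h⟩ else 0) p.2).det = 0}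
      = 0 := by
  classical
  set σ := {q : Fin N × Fin N // q.1 = q.2 ∨ G.Adj q.1 q.2} with hσ
  let M : Matrix (Fin N) (Fin N) (MvPolynomial (σ ⊕ Fin N) ℝ) := Matrix.of fun i j =>
    if h : i = j ∨ G.Adj i j then
      MvPolynomial.C (Wbar i j) + MvPolynomial.X (Sum.inl ⟨(i, j), h⟩) else 0
  let v : Fin N → MvPolynomial (σ ⊕ Fin N) ℝ := fun i => MvPolynomial.X (Sum.inr i)
  let P : MvPolynomial (σ ⊕ Fin N) ℝ :=
    (Matrix.of fun i k : Fin N => ((M ^ (k : ℕ)) *ᵥ v) i).det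
  have heval : ∀ x : σ ⊕ Fin N → ℝ,
      MvPolynomial.eval x P = (krylov (Matrix.of fun i j =>
        if h : i = j ∨ G.Adj i j then Wbar i j + x (Sum.inl ⟨(i, j), h⟩) else 0)
        (fun i => x (Sum.inr i))).det := by
    intro x
    have hmap : M.map (MvPolynomial.eval x) = Matrix.of fun i j =>
        if h : i = j ∨ G.Adj i j then Wbar i j + x (Sum.inl ⟨(i, j), h⟩) else 0 := by
      ext i j
      simp only [M, Matrix.map_apply, Matrix.of_apply, apply_dite (MvPolynomial.eval x),
        map_add, MvPolynomial.eval_C, MvPolynomial.eval_X, map_zero]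
    rw [show MvPolynomial.eval x P = _ from RingHom.map_det (MvPolynomial.eval x) _]
    congr 1
    ext i k
    show MvPolynomial.eval x (((M ^ (k : ℕ)) *ᵥ v) i) = _
    rw [ringHom_mulVec, ringHom_map_pow, hmap]
    simp [krylov, v]
  have hP : P ≠ 0 := by
    intro h0
    set d : Fin N → ℝ := fun i => ((i : ℕ) : ℝ) with hd
    set x₀ : σ ⊕ Fin N → ℝ := Sum.elim
      (fun a => (if a.1.1 = a.1.2 then d a.1.1 else 0) - Wbar a.1.1 a.1.2) (fun _ => 1) with hx₀
    have hMd : (Matrix.of fun i j =>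
        if h : i = j ∨ G.Adj i j then Wbar i j + x₀ (Sum.inl ⟨(i, j), h⟩) else 0)
        = Matrix.diagonal d := by
      ext i j
      by_cases h : i = j ∨ G.Adj i j
      · rw [Matrix.of_apply, dif_pos h]
        by_cases hij : i = j
        · subst hij
          simp [x₀, Matrix.diagonal_apply_eq]
        · simp [x₀, hij, Matrix.diagonal_apply_ne _ hij]
      · rw [Matrix.of_apply, dif_neg h]
        push_neg at h
        rw [Matrix.diagonal_apply_ne _ h.1]
    have hK : krylov (Matrix.diagonal d) (fun _ => 1) = Matrix.vandermonde d := by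
      ext i k
      simp [krylov, Matrix.diagonal_pow, Matrix.mulVec_diagonal, Matrix.vandermonde]
    have := heval x₀
    rw [h0, map_zero] at this
    rw [hMd] at this
    have hv : (fun i => x₀ (Sum.inr i)) = fun _ : Fin N => (1 : ℝ) := rfl
    rw [hv, hK] at this
    have hinj : Function.Injective d := fun a b hab => by
      exact Fin.val_injective (Nat.cast_injective hab)
    exact Matrix.det_vandermonde_ne_zero_iff.mpr hinj this.symm
  have hz := mvpoly_null' P hP
  let es := MeasurableEquiv.sumPiEquivProdPi (fun _ : σ ⊕ Fin N => ℝ)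
  have hmp := MeasureTheory.volume_measurePreserving_sumPiEquivProdPi_symm
    (fun _ : σ ⊕ Fin N => ℝ)
  have key : {p : (σ → ℝ) × (Fin N → ℝ) |
      (krylov (Matrix.of fun i j =>
        if h : i = j ∨ G.Adj i j then Wbar i j + p.1 ⟨(i, j), h⟩ else 0) p.2).det = 0}
      = es.symm ⁻¹' {x | MvPolynomial.eval x P = 0} := by
    ext ⟨δ, w⟩
    simp only [Set.mem_preimage, Set.mem_setOf_eq]
    rw [heval (es.symm (δ, w))]
    rfl
  have hmeas : MeasurableSet {x : σ ⊕ Fin N → ℝ | MvPolynomial.eval x P = 0} :=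
    measurableSet_eq_fun (measurable_mv_eval P) measurable_const
  rw [key]
  exact (hmp.measure_preimage hmeas.nullMeasurableSet).trans hz
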